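/- arXiv:1211.4810 — 4 statements merged into one kernel-verified Lean document; each statement's English description precedes it below -/
import Mathlib

section
/- The series ∑_{q=2}^{∞} φ(q)/(2^q − 1)^2 converges and its sum is strictly less than 25/56. -/
/-- The series `∑_{q=2}^∞ φ(q) / (2^q - 1)^2` converges and its sum is strictly
less than `25/56`. -/
theorem sum_totient_over_two_pow_sub_one_sq_lt :
    Summable (fun q : ℕ => (Nat.totient (q + 2) : ℝ) / (2 ^ (q + 2) - 1) ^ 2) ∧
    ∑' q : ℕ, (Nat.totient (q + 2) : ℝ) / (2 ^ (q + 2) - 1) ^ 2 < 25 / 56 := by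
  set a : ℕ → ℝ := fun n => (n : ℝ) * (1/4) ^ n with ha_def
  have hr : ‖(1/4 : ℝ)‖ < 1 := by rw [Real.norm_eq_abs, abs_of_nonneg (by norm_num : (0:ℝ) ≤ 1/4)]; norm_num
  have ha : Summable a := by
    simpa [ha_def] using summable_pow_mul_geometric_of_norm_lt_one 1 hr
  have ha2 : Summable (fun n => a (n + 2)) := (summable_nat_add_iff 2).2 ha
  have hta : ∑' n, a n = 4/9 := by
    rw [ha_def, tsum_coe_mul_geometric_of_norm_lt_one hr]; norm_num
  have hta2 : ∑' n, a (n + 2) = 7/36 := by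
    have h := Summable.sum_add_tsum_nat_add 2 ha
    rw [hta] at h
    have hs : ∑ i ∈ Finset.range 2, a i = 1/4 := by
      simp [ha_def, Finset.sum_range_succ]
    rw [hs] at h
    linarith
  have hle : ∀ q : ℕ, (Nat.totient (q + 2) : ℝ) / (2 ^ (q + 2) - 1) ^ 2 ≤
      16/9 * a (q + 2) := by
    intro q
    have h4 : (4 : ℝ) ≤ 2 ^ (q + 2) := by
      calc (4 : ℝ) = 2 ^ 2 := by norm_num
      _ ≤ 2 ^ (q + 2) := by
        apply pow_le_pow_right₀ (by norm_num)
        omega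
    have hd : (3 : ℝ) ≤ 2 ^ (q + 2) - 1 := by linarith
    have hdpos : (0 : ℝ) < (2 ^ (q + 2) - 1) ^ 2 := by positivity
    have hphi : (Nat.totient (q + 2) : ℝ) ≤ (q + 2 : ℕ) := by
      exact_mod_cast Nat.totient_le _
    have hdenom : (9/16 : ℝ) * 4 ^ (q + 2) ≤ (2 ^ (q + 2) - 1) ^ 2 := by
      have h1 : (3/4 : ℝ) * 2 ^ (q + 2) ≤ 2 ^ (q + 2) - 1 := by linarith
      have h2 : (0 : ℝ) ≤ (3/4 : ℝ) * 2 ^ (q + 2) := by positivity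
      calc (9/16 : ℝ) * 4 ^ (q + 2) = ((3/4) * 2 ^ (q + 2)) ^ 2 := by
            rw [mul_pow, show (4:ℝ) = 2^2 by norm_num, ← pow_mul, mul_comm 2 (q+2), pow_mul]
            ring
        _ ≤ (2 ^ (q + 2) - 1) ^ 2 := by
            apply pow_le_pow_left₀ h2 h1
    have hphinn : (0 : ℝ) ≤ (Nat.totient (q + 2) : ℝ) := by positivity
    calc (Nat.totient (q + 2) : ℝ) / (2 ^ (q + 2) - 1) ^ 2
        ≤ ((q + 2 : ℕ) : ℝ) / ((9/16) * 4 ^ (q + 2)) := by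
          apply div_le_div₀ (by positivity) hphi (by positivity) hdenom
      _ = 16/9 * a (q + 2) := by
          simp only [ha_def]
          push_cast
          rw [div_eq_mul_inv, mul_inv]
          rw [div_pow]
          field_simp
          ring
  have hnn : ∀ q : ℕ, 0 ≤ (Nat.totient (q + 2) : ℝ) / (2 ^ (q + 2) - 1) ^ 2 := by
    intro q
    have h4 : (4 : ℝ) ≤ 2 ^ (q + 2) := by
      calc (4 : ℝ) = 2 ^ 2 := by norm_num
      _ ≤ 2 ^ (q + 2) := by
        apply pow_le_pow_right₀ (by norm_num)
        omega
    have : (0:ℝ) < (2 ^ (q + 2) - 1) ^ 2 := by nlinarith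
    positivity
  have hg : Summable (fun q => 16/9 * a (q + 2)) := ha2.mul_left _
  have hf : Summable (fun q : ℕ => (Nat.totient (q + 2) : ℝ) / (2 ^ (q + 2) - 1) ^ 2) :=
    Summable.of_nonneg_of_le hnn hle hg
  refine ⟨hf, ?_⟩
  have := Summable.tsum_le_tsum hle hf hg
  rw [tsum_mul_left, hta2] at this
  linarith
end

section
/- Fix θ₀ ∈ (0, 1) and for real θ set α = e^{2πiθ₀}, β(θ) = e^{2πi(θ−θ₀)}, γ(θ) = (2 − α − β(θ))/(1 − αβ(θ)), σ₁(θ) = α + β(θ) + γ(θ) and σ₂(θ) = αβ(θ) + αγ(θ) + β(θ)γ(θ). Then, as θ tends to 0 through nonzero real values, |σ₁(θ)| tends to +∞ and σ₂(θ)/σ₁(θ) tends to 2cos(2πθ₀). -/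
open Complex Filter

/-- Fix `θ₀ ∈ (0, 1)`, and set `α = e^{2πiθ₀}`, `β(θ) = e^{2πi(θ - θ₀)}`,
`γ(θ) = (2 - α - β(θ)) / (1 - αβ(θ))`, `σ₁(θ) = α + β(θ) + γ(θ)` and
`σ₂(θ) = αβ(θ) + αγ(θ) + β(θ)γ(θ)`. Then, as the real parameter `θ` tends to `0` through
nonzero values, `|σ₁(θ)| → +∞` and `σ₂(θ)/σ₁(θ) → 2cos(2πθ₀)`. -/
theorem lambda_theta_tendsto_infinity_point (θ₀ : ℝ) (hθ₀ : θ₀ ∈ Set.Ioo (0 : ℝ) 1)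
    (α : ℂ) (β γ σ₁ σ₂ : ℝ → ℂ)
    (hα : α = Complex.exp (2 * Real.pi * Complex.I * θ₀))
    (hβ : ∀ θ : ℝ, β θ = Complex.exp (2 * Real.pi * Complex.I * (θ - θ₀)))
    (hγ : ∀ θ : ℝ, γ θ = (2 - α - β θ) / (1 - α * β θ))
    (hσ₁ : ∀ θ : ℝ, σ₁ θ = α + β θ + γ θ)
    (hσ₂ : ∀ θ : ℝ, σ₂ θ = α * β θ + α * γ θ + β θ * γ θ) :
    Tendsto (fun θ : ℝ => ‖σ₁ θ‖) (nhdsWithin 0 {0}ᶜ) atTop ∧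
    Tendsto (fun θ : ℝ => σ₂ θ / σ₁ θ) (nhdsWithin 0 {0}ᶜ)
      (nhds ((2 * Real.cos (2 * Real.pi * θ₀) : ℝ) : ℂ)) := by
  obtain ⟨hθ₀0, hθ₀1⟩ := hθ₀
  set l := nhdsWithin (0:ℝ) ({0}ᶜ : Set ℝ) with hl
  -- basic facts
  have habs1 : ∀ x : ℝ, ‖Complex.exp (2 * Real.pi * Complex.I * x)‖ = 1 := by
    intro x
    rw [show (2 * Real.pi * Complex.I * (x:ℂ)) = ((2 * Real.pi * x : ℝ) : ℂ) * Complex.I by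
      push_cast; ring, Complex.norm_exp_ofReal_mul_I]
  have hβcont : Continuous β := by
    rw [show β = fun θ : ℝ => Complex.exp (2 * Real.pi * Complex.I * ((θ:ℂ) - (θ₀:ℂ))) from
      funext fun θ => by rw [hβ θ]]
    fun_prop
  have hβl : Tendsto β l (nhds (β 0)) := (hβcont.tendsto 0).mono_left nhdsWithin_le_nhds
  have hαβ0 : α * β 0 = 1 := by
    rw [hα, hβ, ← Complex.exp_add]
    rw [show (2 * Real.pi * Complex.I * (θ₀:ℂ) + 2 * Real.pi * Complex.I * (((0:ℝ):ℂ) - θ₀)) = 0 by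
      push_cast; ring, Complex.exp_zero]
  -- the sum α + β 0
  have hs : α + β 0 = ((2 * Real.cos (2 * Real.pi * θ₀) : ℝ) : ℂ) := by
    rw [hα, hβ]
    rw [show (2 * Real.pi * Complex.I * (θ₀:ℂ)) = ((2 * Real.pi * θ₀ : ℝ) : ℂ) * Complex.I by
      push_cast; ring,
      show (2 * Real.pi * Complex.I * (((0:ℝ):ℂ) - θ₀)) = ((-(2 * Real.pi * θ₀) : ℝ) : ℂ) * Complex.I by
      push_cast; ring]
    rw [Complex.exp_mul_I, Complex.exp_mul_I, Complex.ofReal_neg, Complex.cos_neg,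
      Complex.sin_neg, ← Complex.ofReal_cos]
    push_cast
    ring
  set c : ℂ := 2 - α - β 0 with hc
  have hcne : c ≠ 0 := by
    have hcos : Real.cos (2 * Real.pi * θ₀) < 1 := by
      rcases lt_or_ge (Real.cos (2 * Real.pi * θ₀)) 1 with h | h
      · exact h
      · exfalso
        have h1 : Real.cos (2 * Real.pi * θ₀) = 1 := le_antisymm (Real.cos_le_one _) h
        have h2 : 2 * Real.pi * θ₀ = 0 := by
          have hlt : 2 * Real.pi * θ₀ < 2 * Real.pi := by
            nlinarith [Real.pi_pos]
          have hgt : -(2 * Real.pi) < 2 * Real.pi * θ₀ := by nlinarith [Real.pi_pos]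
          exact (Real.cos_eq_one_iff_of_lt_of_lt hgt hlt).mp h1
        nlinarith [Real.pi_pos]
    have : c = ((2 - 2 * Real.cos (2 * Real.pi * θ₀) : ℝ) : ℂ) := by
      rw [hc, show (2:ℂ) - α - β 0 = 2 - (α + β 0) by ring, hs]; push_cast; ring
    rw [this]
    exact_mod_cast Complex.ofReal_ne_zero.mpr (by linarith)
  -- numerator and denominator limits
  have hN : Tendsto (fun θ => 2 - α - β θ) l (nhds c) := by
    simpa using (tendsto_const_nhds (x := (2:ℂ) - α)).sub hβl
  have hD : Tendsto (fun θ => 1 - α * β θ) l (nhds 0) := by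
    have := (tendsto_const_nhds (x := (1:ℂ))).sub ((tendsto_const_nhds (x := α)).mul hβl)
    rwa [hαβ0, sub_self] at this
  -- D ≠ 0 eventually
  have hDnz : ∀ᶠ θ in l, 1 - α * β θ ≠ 0 := by
    have h1 : ∀ᶠ θ : ℝ in l, θ ∈ Set.Ioo (-1:ℝ) 1 :=
      eventually_nhdsWithin_of_eventually_nhds
        (eventually_mem_nhds_iff.mpr (Ioo_mem_nhds (by norm_num) (by norm_num)) |>.mono
          fun x hx => mem_of_mem_nhds hx)
    have h2 : ∀ᶠ θ : ℝ in l, θ ≠ 0 := by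
      filter_upwards [self_mem_nhdsWithin] with θ hθ
      simpa using hθ
    filter_upwards [h1, h2] with θ hθ hθ0 habs
    have hone : α * β θ = 1 := (sub_eq_zero.mp habs).symm
    rw [hα, hβ, ← Complex.exp_add] at hone
    rw [Complex.exp_eq_one_iff] at hone
    obtain ⟨n, hn⟩ := hone
    have hne : (2 * Real.pi * Complex.I : ℂ) ≠ 0 := by
      simp [Real.pi_ne_zero, Complex.I_ne_zero]
    have hθn : (θ : ℂ) = (n : ℂ) := by
      apply mul_left_cancel₀ hne
      rw [show (2 * Real.pi * Complex.I : ℂ) * θ =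
        2 * Real.pi * Complex.I * (θ₀:ℂ) + 2 * Real.pi * Complex.I * ((θ:ℂ) - θ₀) by ring, hn]
      ring
    have hθr : θ = (n : ℝ) := by exact_mod_cast hθn
    have hn0 : n = 0 := by
      have h1 : (-1:ℝ) < (n:ℝ) := hθr ▸ hθ.1
      have h2 : ((n:ℝ)) < 1 := hθr ▸ hθ.2
      have := (by exact_mod_cast h1 : (-1:ℤ) < n)
      have := (by exact_mod_cast h2 : n < 1)
      omega
    exact hθ0 (by rw [hθr, hn0]; simp)
  -- |γ| → ∞
  have hγabs : Tendsto (fun θ => ‖γ θ‖) l atTop := by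
    have hNabs : Tendsto (fun θ => ‖2 - α - β θ‖) l (nhds (‖c‖)) :=
      (continuous_norm.tendsto c).comp hN
    have hDabs : Tendsto (fun θ => ‖1 - α * β θ‖) l (nhdsWithin 0 (Set.Ioi 0)) := by
      rw [tendsto_nhdsWithin_iff]
      constructor
      · simpa using hD.norm
      · filter_upwards [hDnz] with θ hθ
        exact norm_pos_iff.mpr hθ
    have hinv : Tendsto (fun θ => (‖1 - α * β θ‖)⁻¹) l atTop :=
      tendsto_inv_nhdsGT_zero.comp hDabs
    have habsc : 0 < ‖c‖ := norm_pos_iff.mpr hcne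
    have := Filter.Tendsto.pos_mul_atTop habsc hNabs hinv
    refine this.congr fun θ => ?_
    rw [hγ, norm_div, div_eq_mul_inv]
  -- first conclusion
  have hσ₁abs : Tendsto (fun θ : ℝ => ‖σ₁ θ‖) l atTop := by
    have hsub : Tendsto (fun θ => ‖γ θ‖ + (-2)) l atTop :=
      tendsto_atTop_add_const_right l (-2) hγabs
    refine tendsto_atTop_mono (fun θ => ?_) hsub
    have hγe : γ θ = σ₁ θ - α - β θ := by rw [hσ₁]; ring
    have h1 : ‖γ θ‖ ≤ ‖σ₁ θ‖ + ‖α‖ + ‖β θ‖ := by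
      rw [hγe]
      calc ‖σ₁ θ - α - β θ‖ ≤ ‖σ₁ θ - α‖ + ‖β θ‖ := by
            simpa using norm_sub_le (σ₁ θ - α) (β θ)
        _ ≤ ‖σ₁ θ‖ + ‖α‖ + ‖β θ‖ := by
            have := norm_sub_le (σ₁ θ) α
            linarith
    have hαa : ‖α‖ = 1 := by rw [hα]; exact habs1 θ₀
    have hβa : ‖β θ‖ = 1 := by
      rw [hβ]
      rw [show (2 * Real.pi * Complex.I * ((θ:ℂ) - θ₀)) = 2 * Real.pi * Complex.I * ((θ - θ₀ : ℝ):ℂ) by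
        push_cast; ring]
      exact habs1 (θ - θ₀)
    rw [hαa, hβa] at h1
    linarith
  refine ⟨hσ₁abs, ?_⟩
  -- second conclusion
  have hσ₁nz : ∀ᶠ θ in l, σ₁ θ ≠ 0 := by
    filter_upwards [hσ₁abs.eventually_gt_atTop 0] with θ hθ
    exact fun h => by simp [h] at hθ
  set num : ℝ → ℂ := fun θ => α * β θ * (1 - α * β θ) + (α + β θ) * (2 - α - β θ) with hnum
  set den : ℝ → ℂ := fun θ => (α + β θ) * (1 - α * β θ) + (2 - α - β θ) with hden
  have hnumlim : Tendsto num l (nhds ((α + β 0) * c)) := by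
    have : Tendsto num l (nhds (α * β 0 * 0 + (α + β 0) * c)) :=
      (((tendsto_const_nhds (x := α)).mul hβl).mul hD).add
        (((tendsto_const_nhds (x := α)).add hβl).mul hN)
    simpa using this
  have hdenlim : Tendsto den l (nhds c) := by
    have : Tendsto den l (nhds ((α + β 0) * 0 + c)) :=
      (((tendsto_const_nhds (x := α)).add hβl).mul hD).add hN
    simpa using this
  have hquot : Tendsto (fun θ => num θ / den θ) l (nhds ((α + β 0) * c / c)) :=
    hnumlim.div hdenlim hcne
  rw [mul_div_cancel_right₀ _ hcne] at hquot
  have heq : ∀ᶠ θ in l, σ₂ θ / σ₁ θ = num θ / den θ := by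
    filter_upwards [hDnz, hσ₁nz] with θ hDθ hσθ
    have hγD : γ θ * (1 - α * β θ) = 2 - α - β θ := by
      rw [hγ]; field_simp
    have e2 : σ₁ θ * (1 - α * β θ) = den θ := by
      rw [hσ₁, hden]
      calc (α + β θ + γ θ) * (1 - α * β θ)
          = (α + β θ) * (1 - α * β θ) + γ θ * (1 - α * β θ) := by ring
        _ = (α + β θ) * (1 - α * β θ) + (2 - α - β θ) := by rw [hγD]
    have e1 : σ₂ θ * (1 - α * β θ) = num θ := by
      rw [hσ₂, hnum]
      calc (α * β θ + α * γ θ + β θ * γ θ) * (1 - α * β θ)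
          = α * β θ * (1 - α * β θ) + (α + β θ) * (γ θ * (1 - α * β θ)) := by ring
        _ = α * β θ * (1 - α * β θ) + (α + β θ) * (2 - α - β θ) := by rw [hγD]
    calc σ₂ θ / σ₁ θ = σ₂ θ * (1 - α * β θ) / (σ₁ θ * (1 - α * β θ)) := by
          rw [mul_div_mul_right _ _ hDθ]
      _ = num θ / den θ := by rw [e1, e2]
  have heq' : (fun θ => num θ / den θ) =ᶠ[l] fun θ => σ₂ θ / σ₁ θ :=
    heq.mono fun θ h => h.symm
  have := hquot.congr' heq'
  rwa [hs] at this
end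

section
/- Let P, Q ∈ ℂ[X] with deg P ≤ 2 and deg Q = 2, and let R = P − X·Q (so deg R = 3). Suppose R has three distinct roots z₁, z₂, z₃ with Q(zᵢ) ≠ 0 for each i, and define the multipliers λᵢ = (P'(zᵢ)Q(zᵢ) − P(zᵢ)Q'(zᵢ))/Q(zᵢ)² (the derivative of f = P/Q at the fixed point zᵢ). If λᵢ ≠ 1 for i = 1, 2, 3, then 1/(1−λ₁) + 1/(1−λ₂) + 1/(1−λ₃) = 1. -/
open Polynomial

/-- Holomorphic fixed point index formula for a quadratic rational map `f = P/Q` with three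
distinct finite fixed points `z i` (roots of `R = P - X·Q`), none of which is a pole: if the
multipliers `λ i = f'(z i)` are all `≠ 1`, then `∑ 1/(1 - λ i) = 1`. -/
theorem holomorphic_index_formula (P Q : Polynomial ℂ)
    (hP : P.degree ≤ 2) (hQ : Q.degree = 2)
    (z : Fin 3 → ℂ) (hz : Function.Injective z)
    (hroot : ∀ i, (P - Polynomial.X * Q).eval (z i) = 0)
    (hQz : ∀ i, Q.eval (z i) ≠ 0)
    (lam : Fin 3 → ℂ)
    (hlam : ∀ i, lam i =
      (P.derivative.eval (z i) * Q.eval (z i) - P.eval (z i) * Q.derivative.eval (z i)) /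
        (Q.eval (z i)) ^ 2)
    (hne : ∀ i, lam i ≠ 1) :
    1 / (1 - lam 0) + 1 / (1 - lam 1) + 1 / (1 - lam 2) = 1 := by
  have hPn : P.natDegree < 3 := by
    have : P.natDegree ≤ 2 := natDegree_le_iff_degree_le.2 hP
    omega
  have hQn : Q.natDegree = 2 := natDegree_eq_of_degree_eq_some hQ
  have hQn3 : Q.natDegree < 3 := by omega
  have hQ0 : Q ≠ 0 := fun h => by simp [h] at hQ
  set p0 := P.coeff 0 with hp0d
  set p1 := P.coeff 1 with hp1d
  set p2 := P.coeff 2 with hp2d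
  set q0 := Q.coeff 0 with hq0d
  set q1 := Q.coeff 1 with hq1d
  set q2 := Q.coeff 2 with hq2d
  have hq2 : q2 ≠ 0 := by
    have := leadingCoeff_ne_zero.2 hQ0
    rwa [leadingCoeff, hQn] at this
  have hp3 : P.coeff 3 = 0 := coeff_eq_zero_of_natDegree_lt hPn
  have hq3 : Q.coeff 3 = 0 := coeff_eq_zero_of_natDegree_lt hQn3
  have hPe : ∀ x : ℂ, P.eval x = p0 + p1 * x + p2 * x ^ 2 := by
    intro x
    rw [eval_eq_sum_range' hPn x]
    simp only [Finset.sum_range_succ, Finset.sum_range_zero]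
    ring
  have hQe : ∀ x : ℂ, Q.eval x = q0 + q1 * x + q2 * x ^ 2 := by
    intro x
    rw [eval_eq_sum_range' hQn3 x]
    simp only [Finset.sum_range_succ, Finset.sum_range_zero]
    ring
  have hPd : ∀ x : ℂ, P.derivative.eval x = p1 + 2 * p2 * x := by
    intro x
    have hd : P.derivative.natDegree < 3 :=
      lt_of_le_of_lt (natDegree_derivative_le P) (by omega)
    rw [eval_eq_sum_range' hd x]
    simp only [Finset.sum_range_succ, Finset.sum_range_zero, coeff_derivative, hp3, ← hp1d,
      ← hp2d]
    push_cast
    ring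
  have hQd : ∀ x : ℂ, Q.derivative.eval x = q1 + 2 * q2 * x := by
    intro x
    have hd : Q.derivative.natDegree < 3 :=
      lt_of_le_of_lt (natDegree_derivative_le Q) (by omega)
    rw [eval_eq_sum_range' hd x]
    simp only [Finset.sum_range_succ, Finset.sum_range_zero, coeff_derivative, hq3, ← hq1d,
      ← hq2d]
    push_cast
    ring
  set a := z 0 with ha
  set b := z 1 with hb
  set c := z 2 with hc
  have hab : a - b ≠ 0 := sub_ne_zero.2 (hz.ne (by decide))
  have hac : a - c ≠ 0 := sub_ne_zero.2 (hz.ne (by decide))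
  have hbc : b - c ≠ 0 := sub_ne_zero.2 (hz.ne (by decide))
  -- scalar root equations
  have E : ∀ i, p0 + p1 * z i + p2 * (z i) ^ 2
      - z i * (q0 + q1 * z i + q2 * (z i) ^ 2) = 0 := by
    intro i
    have h := hroot i
    rw [eval_sub, eval_mul, eval_X, hPe, hQe] at h
    exact h
  have E0 := E 0
  have E1 := E 1
  have E2 := E 2
  rw [← ha] at E0
  rw [← hb] at E1
  rw [← hc] at E2
  -- divided difference relations
  have Fab : (p1 - q0) + (p2 - q1) * (a + b) - q2 * (a^2 + a*b + b^2) = 0 := by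
    have h : (a - b) * ((p1 - q0) + (p2 - q1) * (a + b) - q2 * (a^2 + a*b + b^2)) = 0 := by
      linear_combination E0 - E1
    rcases mul_eq_zero.1 h with h' | h'
    · exact absurd h' hab
    · exact h'
  have Fac : (p1 - q0) + (p2 - q1) * (a + c) - q2 * (a^2 + a*c + c^2) = 0 := by
    have h : (a - c) * ((p1 - q0) + (p2 - q1) * (a + c) - q2 * (a^2 + a*c + c^2)) = 0 := by
      linear_combination E0 - E2
    rcases mul_eq_zero.1 h with h' | h'
    · exact absurd h' hac
    · exact h'
  have h1 : p2 - q1 - q2 * (a + b + c) = 0 := by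
    have h : (b - c) * (p2 - q1 - q2 * (a + b + c)) = 0 := by
      linear_combination Fab - Fac
    rcases mul_eq_zero.1 h with h' | h'
    · exact absurd h' hbc
    · exact h'
  have h2 : p1 - q0 + q2 * (a*b + b*c + c*a) = 0 := by
    linear_combination Fab - (a + b) * h1
  -- key per-term identities
  have key : ∀ i, 1 - lam i =
      (Q.eval (z i) - P.derivative.eval (z i) + z i * Q.derivative.eval (z i)) / Q.eval (z i) := by
    intro i
    rw [hlam i]
    have hQi := hQz i
    have hPz : P.eval (z i) = z i * Q.eval (z i) := by
      have h := hroot i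
      rw [eval_sub, eval_mul, eval_X] at h
      linear_combination h
    field_simp
    linear_combination (Q.derivative.eval (z i)) * hPz
  have hba : b - a ≠ 0 := sub_ne_zero.2 (hz.ne (by decide))
  have hca : c - a ≠ 0 := sub_ne_zero.2 (hz.ne (by decide))
  have hcb : c - b ≠ 0 := sub_ne_zero.2 (hz.ne (by decide))
  have hDa : Q.eval (z 0) - P.derivative.eval (z 0) + z 0 * Q.derivative.eval (z 0)
      = q2 * ((a - b) * (a - c)) := by
    rw [hQe, hPd, hQd, ← ha]
    linear_combination (-1 : ℂ) * h2 - 2 * a * h1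
  have hDb : Q.eval (z 1) - P.derivative.eval (z 1) + z 1 * Q.derivative.eval (z 1)
      = q2 * ((b - a) * (b - c)) := by
    rw [hQe, hPd, hQd, ← hb]
    linear_combination (-1 : ℂ) * h2 - 2 * b * h1
  have hDc : Q.eval (z 2) - P.derivative.eval (z 2) + z 2 * Q.derivative.eval (z 2)
      = q2 * ((c - a) * (c - b)) := by
    rw [hQe, hPd, hQd, ← hc]
    linear_combination (-1 : ℂ) * h2 - 2 * c * h1
  have hQa : Q.eval (z 0) = q0 + q1 * a + q2 * a ^ 2 := by rw [hQe, ← ha]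
  have hQb : Q.eval (z 1) = q0 + q1 * b + q2 * b ^ 2 := by rw [hQe, ← hb]
  have hQc : Q.eval (z 2) = q0 + q1 * c + q2 * c ^ 2 := by rw [hQe, ← hc]
  rw [key 0, key 1, key 2, hDa, hDb, hDc, hQa, hQb, hQc, one_div_div, one_div_div, one_div_div]
  have d1 : q2 * ((a - b) * (a - c)) ≠ 0 := by
    exact mul_ne_zero hq2 (mul_ne_zero hab hac)
  have d2 : q2 * ((b - a) * (b - c)) ≠ 0 := by
    exact mul_ne_zero hq2 (mul_ne_zero hba hbc)
  have d3 : q2 * ((c - a) * (c - b)) ≠ 0 := by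
    exact mul_ne_zero hq2 (mul_ne_zero hca hcb)
  field_simp
  ring
end

section
/- Let P, Q ∈ ℂ[X] with deg P ≤ 2 and deg Q = 2, and let R = P − X·Q (so deg R = 3). Suppose R has three distinct roots z₁, z₂, z₃ with Q(zᵢ) ≠ 0 for each i, and define the multipliers λᵢ = (P'(zᵢ)Q(zᵢ) − P(zᵢ)Q'(zᵢ))/Q(zᵢ)² (the derivative of f = P/Q at the fixed point zᵢ). Then λ₁λ₂λ₃ = λ₁ + λ₂ + λ₃ − 2. -/
open Polynomial

/-- Milnor's relation `σ₃ = σ₁ - 2` between the elementary symmetric functions of the fixed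
point multipliers of a quadratic rational map `f = P/Q` with three distinct finite fixed
points `z i` (roots of `R = P - X·Q`), none of which is a pole:
`λ₁λ₂λ₃ = λ₁ + λ₂ + λ₃ - 2` where `λ i = f'(z i)`. -/
theorem milnor_sigma_three_relation (P Q : Polynomial ℂ)
    (hP : P.degree ≤ 2) (hQ : Q.degree = 2)
    (z : Fin 3 → ℂ) (hz : Function.Injective z)
    (hroot : ∀ i, (P - Polynomial.X * Q).eval (z i) = 0)
    (hQz : ∀ i, Q.eval (z i) ≠ 0)
    (lam : Fin 3 → ℂ)
    (hlam : ∀ i, lam i =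
      (P.derivative.eval (z i) * Q.eval (z i) - P.eval (z i) * Q.derivative.eval (z i)) /
        (Q.eval (z i)) ^ 2)
     :
    lam 0 * lam 1 * lam 2 = lam 0 + lam 1 + lam 2 - 2 := by
  have hQnat : Q.natDegree = 2 := natDegree_eq_of_degree_eq_some hQ
  set a := Q.coeff 0 with ha
  set b := Q.coeff 1 with hb
  set c := Q.coeff 2 with hc
  -- expanded form of the cubic with roots z 0, z 1, z 2
  have hprod : (X - C (z 0)) * (X - C (z 1)) * (X - C (z 2))
      = X ^ 3 - C (z 0 + z 1 + z 2) * X ^ 2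
        + C (z 0 * z 1 + z 0 * z 2 + z 1 * z 2) * X - C (z 0 * z 1 * z 2) := by
    simp only [C_add, C_mul]; ring
  -- factorization of R = P - X·Q
  have hfac : P - X * Q = C (-c) * ((X - C (z 0)) * (X - C (z 1)) * (X - C (z 2))) := by
    have hS : (P - X * Q) + C c * ((X - C (z 0)) * (X - C (z 1)) * (X - C (z 2))) = 0 := by
      apply eq_zero_of_natDegree_lt_card_of_eval_eq_zero _ hz
      · intro i
        have h := hroot i
        simp only [eval_sub, eval_mul, eval_X] at h
        obtain rfl | rfl | rfl : i = 0 ∨ i = 1 ∨ i = 2 := by omega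
        all_goals
          simp only [eval_add, eval_mul, eval_sub, eval_X, eval_C]
          linear_combination h
      · have hdeg : ((P - X * Q) + C c * ((X - C (z 0)) * (X - C (z 1)) * (X - C (z 2)))).degree ≤ 2 := by
          rw [degree_le_iff_coeff_zero]
          intro m hm
          have hm3 : 3 ≤ m := by exact_mod_cast Nat.lt_iff_add_one_le.mp (by exact_mod_cast hm)
          obtain ⟨n, rfl⟩ : ∃ n, m = n + 3 := ⟨m - 3, by omega⟩
          have hPc : P.coeff (n + 3) = 0 :=
            coeff_eq_zero_of_degree_lt (lt_of_le_of_lt hP (by exact_mod_cast by norm_num))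
          have hXQ : (X * Q).coeff (n + 3) = Q.coeff (n + 2) := by
            simpa using coeff_X_mul Q (n + 2)
          rw [hprod]
          rcases n with _ | n
          · simp only [coeff_add, coeff_sub, hPc, hXQ, coeff_C_mul, coeff_X_pow,
              coeff_C, coeff_X, ← hc]
            norm_num
          · have hQc : Q.coeff (n + 3) = 0 :=
              coeff_eq_zero_of_degree_lt (by rw [hQ]; exact_mod_cast by norm_num)
            simp only [coeff_add, coeff_sub, hPc, hXQ, hQc, coeff_C_mul, coeff_X_pow,
              coeff_C, coeff_X]
            norm_num
            exact fun hx => absurd hx (by omega)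
        have hnd : ((P - X * Q) + C c * ((X - C (z 0)) * (X - C (z 1)) * (X - C (z 2)))).natDegree ≤ 2 :=
          natDegree_le_iff_degree_le.mpr hdeg
        simpa using Nat.lt_of_le_of_lt hnd (by norm_num)
    have h := eq_neg_of_add_eq_zero_left hS
    rw [h]; simp only [map_neg]; ring
  -- evaluation of Q via its coefficients
  have hQeval : ∀ x : ℂ, Q.eval x = a + b * x + c * x ^ 2 := by
    intro x
    rw [eval_eq_sum_range' (n := 3) (by omega) x]
    simp only [Finset.sum_range_succ, Finset.sum_range_zero, zero_add]
    ring
  -- derivative of R evaluated at the fixed points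
  have hderiv := congrArg derivative hfac
  have hkey : ∀ i : Fin 3,
      P.derivative.eval (z i) - (Q.eval (z i) + z i * Q.derivative.eval (z i))
        = (-c) * (((z i - z 0) * (z i - z 1)) + ((z i - z 0) * (z i - z 2))
            + ((z i - z 1) * (z i - z 2))) := by
    intro i
    have h := congrArg (eval (z i)) hderiv
    simp only [derivative_sub, derivative_mul, derivative_X, derivative_C, eval_add, eval_sub,
      eval_mul, eval_X, eval_C, one_mul, zero_mul, add_zero, zero_add, mul_zero,
      eval_one, eval_neg, map_neg, eval_zero] at h
    linear_combination h
  -- value of P at fixed points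
  have hPz : ∀ i, P.eval (z i) = z i * Q.eval (z i) := by
    intro i
    have h := hroot i
    simp only [eval_sub, eval_mul, eval_X] at h
    linear_combination h
  -- multipliers in scalar form
  have hlam' : ∀ i : Fin 3, lam i =
      (Q.eval (z i) + (-c) * (((z i - z 0) * (z i - z 1)) + ((z i - z 0) * (z i - z 2))
          + ((z i - z 1) * (z i - z 2)))) / Q.eval (z i) := by
    intro i
    have hP' : P.derivative.eval (z i)
        = Q.eval (z i) + z i * Q.derivative.eval (z i)
          + (-c) * (((z i - z 0) * (z i - z 1)) + ((z i - z 0) * (z i - z 2))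
            + ((z i - z 1) * (z i - z 2))) := by
      linear_combination hkey i
    rw [hlam i, hP', hPz i]
    have hq := hQz i
    field_simp
    ring
  rw [hlam' 0, hlam' 1, hlam' 2]
  have h0 := hQz 0; have h1 := hQz 1; have h2 := hQz 2
  rw [hQeval (z 0)] at h0 ⊢
  rw [hQeval (z 1)] at h1 ⊢
  rw [hQeval (z 2)] at h2 ⊢
  rw [div_mul_div_comm, div_mul_div_comm, div_add_div _ _ h0 h1,
    div_add_div _ _ (mul_ne_zero h0 h1) h2, eq_sub_iff_add_eq,
    div_add' _ _ _ (mul_ne_zero (mul_ne_zero h0 h1) h2),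
    div_eq_div_iff (mul_ne_zero (mul_ne_zero h0 h1) h2) (mul_ne_zero (mul_ne_zero h0 h1) h2)]
  ring
end
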